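/- Let A ≥ 1 be a natural number and let x be a real number with 0 < x < 1. Then 1/(1 − (1 − x)^A) ≤ 1/(A·x) + 1. -/
import Mathlib

/-- For a natural number `A ≥ 1` and `0 < x < 1`: `1/(1 − (1−x)^A) ≤ 1/(A·x) + 1`. -/
theorem stmt_13 (A : ℕ) (hA : 1 ≤ A) (x : ℝ) (hx : 0 < x) (hx1 : x < 1) :
    1 / (1 - (1 - x) ^ A) ≤ 1 / ((A : ℝ) * x) + 1 := by
  have hApos : (0:ℝ) < A := by exact_mod_cast hA
  have hAx : 0 < (A:ℝ) * x := mul_pos hApos hx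
  have h1x : (0:ℝ) ≤ 1 - x := by linarith
  have hbern : 1 + (A:ℝ) * x ≤ (1 + x) ^ A := one_add_mul_le_pow (by linarith) A
  have h1 : (1 - x) ^ A * (1 + (A:ℝ) * x) ≤ 1 := by
    calc (1 - x) ^ A * (1 + (A:ℝ) * x) ≤ (1 - x) ^ A * (1 + x) ^ A :=
          mul_le_mul_of_nonneg_left hbern (pow_nonneg h1x A)
      _ = (1 - x ^ 2) ^ A := by rw [← mul_pow]; ring_nf
      _ ≤ 1 := pow_le_one₀ (by nlinarith) (by nlinarith)
  have hpow : (1 - x) ^ A < 1 := pow_lt_one₀ h1x (by linarith) (by omega)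
  have hpos : 0 < 1 - (1 - x) ^ A := by linarith
  have key : 1 / (1 - (1 - x) ^ A) ≤ (1 + (A:ℝ) * x) / ((A:ℝ) * x) := by
    rw [div_le_div_iff₀ hpos hAx]
    nlinarith
  calc 1 / (1 - (1 - x) ^ A) ≤ (1 + (A:ℝ) * x) / ((A:ℝ) * x) := key
    _ = 1 / ((A:ℝ) * x) + 1 := by field_simp
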